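/- Let f be convex and differentiable with Hölder continuous gradient of exponent ν ∈ [0,1] and constant L_ν, i.e. ‖∇f(x) − ∇f(y)‖ ≤ L_ν‖x − y‖^ν. Then for any δ > 0 and any L ≥ ((1−ν)/((1+ν)δ))^((1−ν)/(1+ν)) · L_ν^(2/(1+ν)), it holds for all x, y that f(y) ≤ f(x) + ⟨∇f(x), y − x⟩ + (L/2)‖y − x‖² + δ. -/

import Mathlib

set_option maxHeartbeats 1000000

open RealInnerProductSpace


lemma young_aux (ν Lν δ L : ℝ) (h0 : 0 ≤ ν) (h1 : ν ≤ 1) (hLν : 0 < Lν) (hδ : 0 < δ)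
    (hLlb : L ≥ ((1 - ν) / ((1 + ν) * δ)) ^ ((1 - ν) / (1 + ν)) * Lν ^ (2 / (1 + ν))) :
    ∀ t : ℝ, 0 ≤ t → Lν / (1 + ν) * t ^ (1 + ν) ≤ L / 2 * t ^ 2 + δ := by
  intro t ht
  have h1ν : (0:ℝ) < 1 + ν := by linarith
  rcases eq_or_lt_of_le h1 with hν1 | hν1
  · -- ν = 1
    subst hν1
    have e1 : ((1:ℝ) - 1) / ((1 + 1) * δ) = 0 := by norm_num
    have e2 : ((1:ℝ) - 1) / (1 + 1) = 0 := by norm_num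
    rw [e1, e2, Real.rpow_zero, one_mul] at hLlb
    have e3 : (2:ℝ) / (1 + 1) = 1 := by norm_num
    rw [e3, Real.rpow_one] at hLlb
    have e4 : t ^ ((1:ℝ) + 1) = t ^ 2 := by
      rw [show ((1:ℝ)+1) = ((2:ℕ):ℝ) by norm_num, Real.rpow_natCast]
    rw [e4]
    have ht2 : 0 ≤ t^2 := sq_nonneg t
    have : Lν / (1+1) * t^2 ≤ L / 2 * t^2 := by
      apply mul_le_mul_of_nonneg_right _ ht2
      linarith
    linarith
  · -- ν < 1
    have h1mν : (0:ℝ) < 1 - ν := by linarith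
    have hC : 0 < (1 - ν) / ((1 + ν) * δ) := div_pos h1mν (by positivity)
    have hL : 0 < L :=
      lt_of_lt_of_le (mul_pos (Real.rpow_pos_of_pos hC _) (Real.rpow_pos_of_pos hLν _)) hLlb
    set r : ℝ := Lν / L with hrdef
    have hr : 0 < r := div_pos hLν hL
    set T : ℝ := r ^ (1 / (1 - ν)) with hTdef
    have hT : 0 < T := Real.rpow_pos_of_pos hr _
    have key1 : T ^ (1 - ν) = r := by
      rw [hTdef, ← Real.rpow_mul hr.le]
      rw [one_div_mul_cancel (ne_of_gt h1mν), Real.rpow_one]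
    have hLνT : Lν = L * T ^ (1 - ν) := by
      rw [key1, hrdef]; field_simp
    -- g and its derivative
    set g : ℝ → ℝ := fun s => L / 2 * s ^ 2 + δ - Lν / (1 + ν) * s ^ (1 + ν) with hgdef
    have hderiv : ∀ s : ℝ, HasDerivAt g (L * s - Lν * s ^ ν) s := by
      intro s
      have h1 : HasDerivAt (fun s : ℝ => L / 2 * s ^ 2 + δ) (L * s) s := by
        have := ((hasDerivAt_pow 2 s).const_mul (L/2)).add_const δ
        refine this.congr_deriv ?_; push_cast; ring
      have h2 : HasDerivAt (fun s : ℝ => Lν / (1 + ν) * s ^ (1 + ν))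
          (Lν * s ^ ν) s := by
        have hrp := (Real.hasDerivAt_rpow_const (x := s) (p := 1 + ν)
          (Or.inr (by linarith))).const_mul (Lν / (1 + ν))
        have : Lν / (1 + ν) * ((1 + ν) * s ^ (1 + ν - 1)) = Lν * s ^ ν := by
          rw [show (1 + ν - 1) = ν by ring]; field_simp
        rwa [this] at hrp
      exact h1.sub h2
    have gdiff : Differentiable ℝ g := fun s => (hderiv s).differentiableAt
    have hg' : ∀ s, deriv g s = L * s - Lν * s ^ ν := fun s => (hderiv s).deriv
    -- derivative sign helper
    have hsplit : ∀ s : ℝ, 0 < s → L * s = L * s ^ (1 - ν) * s ^ ν := by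
      intro s hs
      rw [mul_assoc, ← Real.rpow_add hs]
      norm_num
    -- g T ≥ 0
    have hT2 : Lν * T ^ (1 + ν) = L * T ^ 2 := by
      rw [hLνT, mul_assoc, ← Real.rpow_add hT]
      rw [show (1 - ν + (1 + ν)) = ((2:ℕ):ℝ) by push_cast; ring, Real.rpow_natCast]
    have hTpow : T ^ 2 = r ^ (2 / (1 - ν)) := by
      rw [hTdef, ← Real.rpow_natCast (r ^ (1/(1-ν))) 2, ← Real.rpow_mul hr.le]
      congr 1
      push_cast
      ring
    -- main numeric inequality
    have hF : (0:ℝ) < L ^ ((1 + ν) / (1 - ν)) := Real.rpow_pos_of_pos hL _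
    have hpow : (1 - ν) / ((1 + ν) * δ) * Lν ^ (2 / (1 - ν)) ≤ L ^ ((1 + ν) / (1 - ν)) := by
      have hB : 0 < ((1 - ν) / ((1 + ν) * δ)) ^ ((1 - ν) / (1 + ν)) * Lν ^ (2 / (1 + ν)) :=
        mul_pos (Real.rpow_pos_of_pos hC _) (Real.rpow_pos_of_pos hLν _)
      have := Real.rpow_le_rpow hB.le hLlb (by positivity : (0:ℝ) ≤ (1 + ν) / (1 - ν))
      calc (1 - ν) / ((1 + ν) * δ) * Lν ^ (2 / (1 - ν))
          = (((1 - ν) / ((1 + ν) * δ)) ^ ((1 - ν) / (1 + ν)) * Lν ^ (2 / (1 + ν)))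
              ^ ((1 + ν) / (1 - ν)) := by
            rw [Real.mul_rpow (Real.rpow_pos_of_pos hC _).le (Real.rpow_pos_of_pos hLν _).le,
              ← Real.rpow_mul hC.le, ← Real.rpow_mul hLν.le]
            rw [show (1 - ν) / (1 + ν) * ((1 + ν) / (1 - ν)) = 1 by
              field_simp, Real.rpow_one]
            rw [show 2 / (1 + ν) * ((1 + ν) / (1 - ν)) = 2 / (1 - ν) by
              field_simp]
        _ ≤ L ^ ((1 + ν) / (1 - ν)) := this
    have hLE : L ^ (2 / (1 - ν)) = L * L ^ ((1 + ν) / (1 - ν)) := by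
      rw [show 2 / (1 - ν) = 1 + (1 + ν) / (1 - ν) by field_simp; ring,
        Real.rpow_add hL, Real.rpow_one]
    have hLT2 : L * T ^ 2 = Lν ^ (2 / (1 - ν)) / L ^ ((1 + ν) / (1 - ν)) := by
      rw [hTpow, hrdef, Real.div_rpow hLν.le hL.le, hLE]
      field_simp
    have hgT : 0 ≤ g T := by
      have key : (1 - ν) * Lν ^ (2 / (1 - ν)) ≤ (1 + ν) * δ * L ^ ((1 + ν) / (1 - ν)) := by
        rw [div_mul_eq_mul_div, div_le_iff₀ (by positivity : (0:ℝ) < (1 + ν) * δ)] at hpow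
        nlinarith
      have hLT2le : L * T ^ 2 * (1 - ν) ≤ (1 + ν) * δ := by
        rw [hLT2, div_mul_eq_mul_div, div_le_iff₀ hF]
        nlinarith
      have : Lν / (1 + ν) * T ^ (1 + ν) = L * T ^ 2 / (1 + ν) := by
        rw [div_mul_eq_mul_div, hT2]
      simp only [hgdef]
      rw [this, sub_nonneg, div_le_iff₀ h1ν]
      nlinarith [sq_nonneg T, hL.le]
    -- monotonicity on the two sides
    have hanti : AntitoneOn g (Set.Icc 0 T) := by
      apply antitoneOn_of_deriv_nonpos (convex_Icc 0 T) gdiff.continuous.continuousOn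
        (gdiff.differentiableOn)
      intro s hs
      rw [interior_Icc] at hs
      obtain ⟨hs0, hsT⟩ := hs
      rw [hg']
      have : L * s ≤ Lν * s ^ ν := by
        rw [hsplit s hs0, hLνT]
        have : s ^ (1 - ν) ≤ T ^ (1 - ν) :=
          Real.rpow_le_rpow hs0.le hsT.le h1mν.le
        have hsν : (0:ℝ) ≤ s ^ ν := (Real.rpow_pos_of_pos hs0 ν).le
        have := mul_le_mul_of_nonneg_right (mul_le_mul_of_nonneg_left this hL.le) hsν
        linarith
      linarith
    have hmono : MonotoneOn g (Set.Ici T) := by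
      apply monotoneOn_of_deriv_nonneg (convex_Ici T) gdiff.continuous.continuousOn
        (gdiff.differentiableOn)
      intro s hs
      rw [interior_Ici] at hs
      have hsT : T < s := hs
      have hs0 : 0 < s := hT.trans hsT
      rw [hg']
      have : Lν * s ^ ν ≤ L * s := by
        rw [hsplit s hs0, hLνT]
        have : T ^ (1 - ν) ≤ s ^ (1 - ν) :=
          Real.rpow_le_rpow hT.le hsT.le h1mν.le
        have hsν : (0:ℝ) ≤ s ^ ν := (Real.rpow_pos_of_pos hs0 ν).le
        have := mul_le_mul_of_nonneg_right (mul_le_mul_of_nonneg_left this hL.le) hsν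
        linarith
      linarith
    -- conclude
    have hfin : 0 ≤ g t := by
      rcases le_total t T with htT | hTt
      · have h2 : g T ≤ g t := hanti (Set.mem_Icc.2 ⟨ht, htT⟩) (Set.mem_Icc.2 ⟨hT.le, le_refl T⟩) htT
        linarith
      · have h2 : g T ≤ g t := hmono Set.self_mem_Ici hTt hTt
        linarith
    simp only [hgdef] at hfin
    linarith


lemma descent_aux {n : ℕ} (f : EuclideanSpace ℝ (Fin n) → ℝ)
    (f' : EuclideanSpace ℝ (Fin n) → EuclideanSpace ℝ (Fin n))
    (ν Lν : ℝ) (h0 : 0 ≤ ν) (h1 : ν ≤ 1) (hLν : 0 < Lν)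
    (hgrad : ∀ x, HasGradientAt f (f' x) x)
    (hhold : ∀ x y, ‖f' x - f' y‖ ≤ Lν * ‖x - y‖ ^ ν) :
    ∀ x y, f y ≤ f x + ⟪f' x, y - x⟫ + Lν / (1 + ν) * ‖y - x‖ ^ (1 + ν) := by
  intro x y
  have h1ν : (0:ℝ) < 1 + ν := by linarith
  by_cases hxy : y = x
  · subst hxy
    simp only [sub_self, inner_zero_right, norm_zero]
    rw [Real.zero_rpow (ne_of_gt h1ν)]
    simp
  · set v : EuclideanSpace ℝ (Fin n) := y - x with hvdef
    have hv : 0 < ‖v‖ := by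
      rw [norm_pos_iff]
      exact sub_ne_zero.2 hxy
    -- the curve and composite function
    have hcurve : ∀ t : ℝ, HasDerivAt (fun s : ℝ => x + s • v) v t := by
      intro t
      have : HasDerivAt (fun s : ℝ => s • v) ((1:ℝ) • v) t :=
        (hasDerivAt_id t).smul_const v
      simpa using this.const_add x
    have hg : ∀ t : ℝ, HasDerivAt (fun s : ℝ => f (x + s • v)) ⟪f' (x + t • v), v⟫ t := by
      intro t
      have hf := (hgrad (x + t • v)).hasFDerivAt
      have := hf.comp_hasDerivAt t (hcurve t)
      simpa [InnerProductSpace.toDual_apply_apply, Function.comp_def] using this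
    -- auxiliary function h
    set C : ℝ := Lν * ‖v‖ ^ (1 + ν) / (1 + ν) with hCdef
    set h : ℝ → ℝ := fun t => f (x + t • v) - f x - t * ⟪f' x, v⟫ - C * t ^ (1 + ν)
      with hhdef
    have hh' : ∀ t : ℝ,
        HasDerivAt h (⟪f' (x + t • v), v⟫ - ⟪f' x, v⟫ - Lν * ‖v‖ ^ (1 + ν) * t ^ ν) t := by
      intro t
      have h2 : HasDerivAt (fun s : ℝ => s * ⟪f' x, v⟫) ⟪f' x, v⟫ t := by
        simpa using (hasDerivAt_id t).mul_const (⟪f' x, v⟫ : ℝ)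
      have h3 : HasDerivAt (fun s : ℝ => C * s ^ (1 + ν)) (Lν * ‖v‖ ^ (1 + ν) * t ^ ν) t := by
        have hrp := (Real.hasDerivAt_rpow_const (x := t) (p := 1 + ν)
          (Or.inr (by linarith))).const_mul C
        have : C * ((1 + ν) * t ^ (1 + ν - 1)) = Lν * ‖v‖ ^ (1 + ν) * t ^ ν := by
          rw [show (1 + ν - 1) = ν by ring, hCdef]
          field_simp
        rwa [this] at hrp
      exact (((hg t).sub_const (f x)).sub h2).sub h3
    have hdiff : Differentiable ℝ h := fun t => (hh' t).differentiableAt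
    have hanti : AntitoneOn h (Set.Icc 0 1) := by
      apply antitoneOn_of_deriv_nonpos (convex_Icc 0 1) hdiff.continuous.continuousOn
        hdiff.differentiableOn
      intro t htm
      rw [interior_Icc] at htm
      obtain ⟨ht0, ht1⟩ := htm
      rw [(hh' t).deriv]
      have hbound : ⟪f' (x + t • v), v⟫ - ⟪f' x, v⟫ ≤ Lν * ‖v‖ ^ (1 + ν) * t ^ ν := by
        rw [← inner_sub_left]
        calc ⟪f' (x + t • v) - f' x, v⟫ ≤ ‖f' (x + t • v) - f' x‖ * ‖v‖ :=
              real_inner_le_norm _ _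
          _ ≤ Lν * ‖(x + t • v) - x‖ ^ ν * ‖v‖ := by
              apply mul_le_mul_of_nonneg_right (hhold _ _) hv.le
          _ = Lν * ‖v‖ ^ (1 + ν) * t ^ ν := by
              rw [show (x + t • v) - x = t • v by abel, norm_smul,
                Real.norm_eq_abs, abs_of_pos ht0,
                Real.mul_rpow ht0.le (norm_nonneg v)]
              rw [show (1 + ν) = ν + 1 by ring, Real.rpow_add_one (ne_of_gt hv)]
              ring
      linarith
    have hle : h 1 ≤ h 0 := hanti (Set.mem_Icc.2 ⟨le_refl 0, zero_le_one⟩)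
      (Set.mem_Icc.2 ⟨zero_le_one, le_refl 1⟩) zero_le_one
    have h0eq : h 0 = 0 := by
      simp only [hhdef]
      rw [Real.zero_rpow (ne_of_gt h1ν)]
      simp
    have h1eq : h 1 = f y - f x - ⟪f' x, v⟫ - C := by
      simp only [hhdef]
      rw [Real.one_rpow, one_smul, show x + v = y by rw [hvdef]; abel]
      ring
    rw [h0eq, h1eq] at hle
    have : C = Lν / (1 + ν) * ‖v‖ ^ (1 + ν) := by rw [hCdef]; ring
    rw [this] at hle
    linarith

/-- Inexact descent lemma for Hölder-continuous gradients: if `f` is convex differentiable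
with `‖∇f(x) − ∇f(y)‖ ≤ L_ν‖x − y‖^ν`, `ν ∈ [0,1]`, then for any `δ > 0` and any
`L ≥ ((1−ν)/((1+ν)δ))^((1−ν)/(1+ν)) · L_ν^(2/(1+ν))`, we have
`f(y) ≤ f(x) + ⟪∇f(x), y − x⟫ + (L/2)‖y − x‖² + δ` for all `x, y`. -/
theorem inexact_descent_lemma_holder
    {n : ℕ} (f : EuclideanSpace ℝ (Fin n) → ℝ)
    (f' : EuclideanSpace ℝ (Fin n) → EuclideanSpace ℝ (Fin n))
    (ν Lν : ℝ) (hν : ν ∈ Set.Icc (0:ℝ) 1) (hLν : 0 < Lν)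
    (hconv : ConvexOn ℝ Set.univ f)
    (hgrad : ∀ x, HasGradientAt f (f' x) x)
    (hhold : ∀ x y, ‖f' x - f' y‖ ≤ Lν * ‖x - y‖ ^ ν)
    (δ L : ℝ) (hδ : 0 < δ)
    (hLlb : L ≥ ((1 - ν) / ((1 + ν) * δ)) ^ ((1 - ν) / (1 + ν)) * Lν ^ (2 / (1 + ν))) :
    ∀ x y, f y ≤ f x + ⟪f' x, y - x⟫ + L / 2 * ‖y - x‖ ^ 2 + δ := by
  obtain ⟨h0, h1⟩ := hν
  intro x y
  have hd := descent_aux f f' ν Lν h0 h1 hLν hgrad hhold x y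
  have hy := young_aux ν Lν δ L h0 h1 hLν hδ hLlb ‖y - x‖ (norm_nonneg _)
  linarith
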